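/- arXiv:2206.14408 — 3 statements merged into one kernel-verified Lean document; each statement's English description precedes it below -/
import Mathlib

section
/- For any real α > 0 and positive integer n, the sum ∑_{i=1}^n 2^(α√i) is O(√n · 2^(α√n)); more precisely, ∑_{i=1}^n 2^(α√i) ≤ (2^α/(2^α - 1)) · (2⌈√n⌉ + 1) · 2^(α⌈√n⌉). -/
open Real Finset

lemma geom_aux (r : ℝ) (hr : 1 < r) (m : ℕ) :
    ∑ j ∈ Finset.Icc 1 m, r ^ j ≤ r ^ (m + 1) / (r - 1) := by
  have h1 : 0 < r - 1 := by linarith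
  induction m with
  | zero => simp; positivity
  | succ m ih =>
    rw [Finset.sum_Icc_succ_top (by omega)]
    have hpow : (0:ℝ) < r ^ (m+1) := by positivity
    have heq : r ^ (m + 1 + 1) / (r - 1) = r ^ (m+1) / (r-1) + r ^ (m+1) := by
      field_simp; ring
    linarith

lemma lemA (α : ℝ) (hα : 0 < α) (m : ℕ) :
    ∑ i ∈ Finset.Icc 1 (m^2), (2:ℝ) ^ (α * Real.sqrt i) ≤
      ∑ j ∈ Finset.Icc 1 m, (2*(j:ℝ)+1) * (2:ℝ) ^ (α * j) := by
  induction m with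
  | zero => simp
  | succ m ih =>
    have hsub : m^2 ≤ (m+1)^2 := Nat.pow_le_pow_left (Nat.le_succ m) 2
    have h10 : ∀ k : ℕ, Finset.Icc 1 k = Finset.Ioc 0 k := by
      intro k; ext x; simp [Finset.mem_Icc, Finset.mem_Ioc]; omega
    have hsplit : ∑ i ∈ Finset.Icc (1:ℕ) ((m+1)^2), (2:ℝ)^(α * Real.sqrt i)
        = (∑ i ∈ Finset.Icc 1 (m^2), (2:ℝ)^(α * Real.sqrt i))
          + ∑ i ∈ Finset.Ioc (m^2) ((m+1)^2), (2:ℝ)^(α * Real.sqrt i) := by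
      rw [h10, h10]
      exact (Finset.sum_Ioc_consecutive _ (Nat.zero_le _) hsub).symm
    have hblock : ∑ i ∈ Finset.Ioc (m^2) ((m+1)^2), (2:ℝ)^(α * Real.sqrt i)
        ≤ (2*(m:ℝ)+1) * (2:ℝ) ^ (α * (m+1 : ℕ)) := by
      have hb : ∀ i ∈ Finset.Ioc (m^2) ((m+1)^2),
          (2:ℝ)^(α * Real.sqrt i) ≤ (2:ℝ) ^ (α * (m+1 : ℕ)) := by
        intro i hi
        rw [Finset.mem_Ioc] at hi
        have h1 : Real.sqrt i ≤ (m+1 : ℕ) := by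
          rw [show ((m+1 : ℕ):ℝ) = Real.sqrt (((m+1 : ℕ):ℝ)^2) from
            (Real.sqrt_sq (by positivity)).symm]
          apply Real.sqrt_le_sqrt
          have h2 : (i:ℝ) ≤ ((m:ℝ)+1)^2 := by exact_mod_cast hi.2
          push_cast
          nlinarith
        apply Real.rpow_le_rpow_of_exponent_le one_le_two
        exact mul_le_mul_of_nonneg_left h1 hα.le
      calc ∑ i ∈ Finset.Ioc (m^2) ((m+1)^2), (2:ℝ)^(α * Real.sqrt i)
          ≤ (Finset.Ioc (m^2) ((m+1)^2)).card • ((2:ℝ) ^ (α * (m+1 : ℕ))) :=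
            Finset.sum_le_card_nsmul _ _ _ hb
        _ = (2*(m:ℝ)+1) * (2:ℝ) ^ (α * (m+1 : ℕ)) := by
            rw [Nat.card_Ioc, nsmul_eq_mul]
            congr 1
            have : (m+1)^2 - m^2 = 2*m+1 := by nlinarith [Nat.sub_add_cancel hsub]
            rw [this]; push_cast; ring
    rw [hsplit, Finset.sum_Icc_succ_top (by omega)]
    have hpow : (0:ℝ) < (2:ℝ) ^ (α * (m+1 : ℕ)) := Real.rpow_pos_of_pos two_pos _
    have : (2*(m:ℝ)+1) * (2:ℝ) ^ (α * (m+1 : ℕ))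
        ≤ (2*((m+1 : ℕ):ℝ)+1) * (2:ℝ) ^ (α * (m+1 : ℕ)) := by
      apply mul_le_mul_of_nonneg_right _ hpow.le
      push_cast; linarith
    linarith

theorem sum_rpow_sqrt_bound (α : ℝ) (hα : 0 < α) (n : ℕ) (hn : 1 ≤ n) :
    ∑ i ∈ Finset.Icc 1 n, (2 : ℝ) ^ (α * Real.sqrt i) ≤
      (2 ^ α / (2 ^ α - 1)) * (2 * (⌈Real.sqrt n⌉₊ : ℝ) + 1) *
        (2 : ℝ) ^ (α * (⌈Real.sqrt n⌉₊ : ℝ)) := by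
  set m := ⌈Real.sqrt n⌉₊ with hm
  set r : ℝ := (2:ℝ) ^ α with hrdef
  have hr : 1 < r := Real.one_lt_rpow_iff_of_pos two_pos |>.2 (Or.inl ⟨one_lt_two, hα⟩)
  have hr1 : 0 < r - 1 := by linarith
  have hnm : n ≤ m^2 := by
    have h1 : Real.sqrt n ≤ (m:ℝ) := Nat.le_ceil _
    have h2 : (n:ℝ) ≤ ((m^2 : ℕ):ℝ) := by
      push_cast
      nlinarith [Real.sq_sqrt (Nat.cast_nonneg n : (0:ℝ) ≤ n), Real.sqrt_nonneg (n:ℝ)]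
    exact_mod_cast h2
  have step1 : ∑ i ∈ Finset.Icc 1 n, (2 : ℝ) ^ (α * Real.sqrt i)
      ≤ ∑ i ∈ Finset.Icc 1 (m^2), (2 : ℝ) ^ (α * Real.sqrt i) := by
    apply Finset.sum_le_sum_of_subset_of_nonneg
    · exact Finset.Icc_subset_Icc_right hnm
    · intro i _ _; positivity
  have hconv : ∀ j : ℕ, (2:ℝ) ^ (α * (j:ℝ)) = r ^ j := by
    intro j
    rw [hrdef, ← Real.rpow_natCast ((2:ℝ)^α) j, ← Real.rpow_mul (by norm_num)]
  have step2 : ∑ i ∈ Finset.Icc 1 (m^2), (2 : ℝ) ^ (α * Real.sqrt i)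
      ≤ (2*(m:ℝ)+1) * ∑ j ∈ Finset.Icc 1 m, r ^ j := by
    refine (lemA α hα m).trans ?_
    rw [Finset.mul_sum]
    apply Finset.sum_le_sum
    intro j hj
    rw [Finset.mem_Icc] at hj
    rw [hconv j]
    apply mul_le_mul_of_nonneg_right _ (by positivity)
    have : (j:ℝ) ≤ (m:ℝ) := by exact_mod_cast hj.2
    linarith
  have step3 : (2*(m:ℝ)+1) * ∑ j ∈ Finset.Icc 1 m, r ^ j
      ≤ (2*(m:ℝ)+1) * (r ^ (m+1) / (r-1)) := by
    apply mul_le_mul_of_nonneg_left (geom_aux r hr m) (by positivity)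
  have hfin : (2*(m:ℝ)+1) * (r ^ (m+1) / (r-1))
      = (2 ^ α / (2 ^ α - 1)) * (2 * (m : ℝ) + 1) * (2 : ℝ) ^ (α * (m : ℝ)) := by
    rw [hconv m, ← hrdef, pow_succ]
    field_simp
  linarith
end

section
/- Let N ≥ 1, m ≥ 1 be integers, M = 2^m, s ∈ ℤ/N. For k = (k_1,…,k_m) ∈ (ℤ/N)^m and j ∈ ℤ/N, |∑_{b ∈ {0,1}^m} ω_N^{(s-j)⟨b,k⟩}|² = M² · ∏_{i=1}^m cos²(π k_i (s-j)/N), where ω_N = exp(2πi/N). -/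
open Finset Complex

lemma abs_one_add_exp_sq (θ : ℝ) :
    (‖1 + Complex.exp ((θ : ℂ) * Complex.I)‖) ^ 2 =
      4 * (Real.cos (θ / 2)) ^ 2 := by
  have h1 : Complex.exp (((θ/2 : ℝ) : ℂ) * I) * Complex.exp (((θ/2 : ℝ) : ℂ) * I)
      = Complex.exp ((θ : ℂ) * I) := by
    rw [← Complex.exp_add]; congr 1; push_cast; ring
  have h0 : (((θ/2 : ℝ) : ℂ)) * I + -((θ/2 : ℝ) : ℂ) * I = 0 := by ring
  have h2 : Complex.exp (((θ/2 : ℝ) : ℂ) * I) * Complex.exp (-((θ/2 : ℝ) : ℂ) * I) = 1 := by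
    rw [← Complex.exp_add, h0, Complex.exp_zero]
  have key : (1 : ℂ) + Complex.exp ((θ : ℂ) * I)
      = 2 * (Real.cos (θ/2) : ℂ) * Complex.exp (((θ/2 : ℝ) : ℂ) * I) := by
    rw [Complex.ofReal_cos, Complex.cos]
    linear_combination -h1 - h2
  rw [key, norm_mul, norm_mul, Complex.norm_exp_ofReal_mul_I, Complex.norm_real, Real.norm_eq_abs,
    Complex.norm_two, mul_one, mul_pow, _root_.sq_abs]
  ring

theorem abs_sq_sum_phase_eq_prod_cos
    (N m : ℕ) (hN : 1 ≤ N) (hm : 1 ≤ m) [NeZero N]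
    (k : Fin m → ZMod N) (s j : ZMod N) :
    (‖∑ b : Fin m → Bool,
        Complex.exp (2 * Real.pi * Complex.I *
          (((s - j).val : ℂ) * ∑ i, if b i then ((k i).val : ℂ) else 0) / N)‖) ^ 2 =
      ((2 ^ m : ℝ)) ^ 2 *
        ∏ i, (Real.cos (Real.pi * ((k i).val : ℝ) * (((s - j).val : ℝ)) / N)) ^ 2 := by
  set v : ℕ := (s - j).val with hv
  set θ : Fin m → ℝ := fun i => 2 * Real.pi * ((k i).val : ℝ) * v / N with hθ
  have hsum : ∀ b : Fin m → Bool,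
      Complex.exp (2 * Real.pi * Complex.I *
          ((v : ℂ) * ∑ i, if b i then ((k i).val : ℂ) else 0) / N)
      = ∏ i, (if b i then Complex.exp ((θ i : ℂ) * I) else 1) := by
    intro b
    have harg : (2 * (Real.pi : ℂ) * Complex.I *
          ((v : ℂ) * ∑ i, if b i then ((k i).val : ℂ) else 0) / N)
        = ∑ i, (if b i then ((θ i : ℂ) * I) else 0) := by
      rw [Finset.mul_sum, Finset.mul_sum, Finset.sum_div]
      apply Finset.sum_congr rfl
      intro i _
      by_cases h : b i
      · simp only [h, if_true, hθ]
        simp only [Complex.ofReal_div, Complex.ofReal_mul, Complex.ofReal_ofNat,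
          Complex.ofReal_natCast]
        ring
      · simp [h]
    rw [harg, Complex.exp_sum]
    apply Finset.prod_congr rfl
    intro i _
    by_cases h : b i <;> simp [h]
  have hswap : (∑ b : Fin m → Bool, ∏ i, (if b i then Complex.exp ((θ i : ℂ) * I) else 1))
      = ∏ i, ((1 : ℂ) + Complex.exp ((θ i : ℂ) * I)) := by
    have h := Finset.prod_univ_sum (fun _ : Fin m => (Finset.univ : Finset Bool))
      (fun i t => if t then Complex.exp ((θ i : ℂ) * I) else 1)
    rw [Fintype.piFinset_univ] at h
    rw [← h]
    apply Finset.prod_congr rfl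
    intro i _
    simp [add_comm]
  calc (‖∑ b : Fin m → Bool,
        Complex.exp (2 * Real.pi * Complex.I *
          ((v : ℂ) * ∑ i, if b i then ((k i).val : ℂ) else 0) / N)‖) ^ 2
      = (‖∏ i, ((1 : ℂ) + Complex.exp ((θ i : ℂ) * I))‖) ^ 2 := by
        rw [Finset.sum_congr rfl fun b _ => hsum b, hswap]
    _ = ∏ i, (‖(1 : ℂ) + Complex.exp ((θ i : ℂ) * I)‖) ^ 2 := by
        rw [norm_prod, ← Finset.prod_pow]
    _ = ∏ i, (4 * (Real.cos (θ i / 2)) ^ 2) := by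
        exact Finset.prod_congr rfl fun i _ => abs_one_add_exp_sq (θ i)
    _ = ((2 ^ m : ℝ)) ^ 2 *
        ∏ i, (Real.cos (Real.pi * ((k i).val : ℝ) * (v : ℝ) / N)) ^ 2 := by
        rw [Finset.prod_mul_distrib, Finset.prod_const]
        congr 1
        · rw [Finset.card_univ, Fintype.card_fin,
            show (4:ℝ) = 2^2 by norm_num, ← pow_mul, ← pow_mul, mul_comm]
        · apply Finset.prod_congr rfl
          intro i _
          congr 2
          rw [hθ]; ring
end

section
/- Let N ≥ 2, m ≥ 1, M = 2^m, and let k = (k_1,…,k_m) be uniform i.i.d. on ℤ/N. Define Z(k) = (M²/N) · ∑_{j ∈ ℤ/N} ∏_{i=1}^m cos²(π k_i (s-j)/N) for a fixed s ∈ ℤ/N. Then E_k[Z(k)] = M(1 + (M-1)/N) = (M/N)(N + M - 1). -/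
open Finset

lemma sum_cos_geom (N w : ℕ) (hw : 0 < w) (hwN : w < N) :
    ∑ k ∈ Finset.range N, Real.cos (2 * Real.pi * k * w / N) = 0 := by
  have hNpos : 0 < N := hw.trans hwN
  have hN0 : (N : ℝ) ≠ 0 := by exact_mod_cast hNpos.ne'
  have hN0c : (N : ℂ) ≠ 0 := by exact_mod_cast hNpos.ne'
  set z : ℂ := Complex.exp (2 * Real.pi * w / N * Complex.I) with hz
  have hzk : ∀ k : ℕ, Real.cos (2 * Real.pi * k * w / N) = (z ^ k).re := by
    intro k
    rw [hz, ← Complex.exp_nat_mul]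
    rw [show (k : ℂ) * (2 * Real.pi * w / N * Complex.I) =
      ((2 * Real.pi * k * w / N : ℝ) : ℂ) * Complex.I by push_cast; ring]
    rw [Complex.exp_mul_I, Complex.add_re, Complex.mul_re, Complex.I_re, Complex.I_im,
      Complex.cos_ofReal_re, Complex.sin_ofReal_im]
    ring
  have hz1 : z ≠ 1 := by
    rw [hz, Ne, Complex.exp_eq_one_iff]
    push_neg
    intro n h
    have h2 : (2 * Real.pi * w / N : ℂ) * Complex.I = ((n : ℝ) * (2 * Real.pi) : ℝ) * Complex.I := by
      rw [show ((2:ℂ) * Real.pi * w / N) = ((2 * Real.pi * w / N : ℝ) : ℂ) by push_cast; ring] at h ⊢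
      rw [h]; push_cast; ring
    have h3 : (2 * Real.pi * w / N : ℝ) = (n : ℝ) * (2 * Real.pi) := by
      have := mul_right_cancel₀ Complex.I_ne_zero h2
      exact_mod_cast this
    have hpi := Real.pi_pos
    have hlt : (2 * Real.pi * w / N : ℝ) < 2 * Real.pi := by
      rw [div_lt_iff₀ (by exact_mod_cast hNpos)]
      have : (w : ℝ) < N := by exact_mod_cast hwN
      nlinarith
    have hgt : (0 : ℝ) < 2 * Real.pi * w / N := by
      have h1 : (0:ℝ) < w := by exact_mod_cast hw
      have h2 : (0:ℝ) < N := by exact_mod_cast hNpos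
      positivity
    rcases le_or_gt n 0 with hn | hn
    · have : (n : ℝ) ≤ 0 := by exact_mod_cast hn
      nlinarith [h3 ▸ hgt]
    · have : (1:ℝ) ≤ n := by exact_mod_cast hn
      nlinarith [h3 ▸ hlt]
  have hzN : z ^ N = 1 := by
    rw [hz, ← Complex.exp_nat_mul]
    rw [show (N : ℂ) * (2 * Real.pi * w / N * Complex.I) = (w : ℕ) * (2 * Real.pi * Complex.I) by
      field_simp]
    rw [Complex.exp_nat_mul, Complex.exp_two_pi_mul_I, one_pow]
  calc ∑ k ∈ Finset.range N, Real.cos (2 * Real.pi * k * w / N)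
      = (∑ k ∈ Finset.range N, z ^ k).re := by
        rw [Complex.re_sum]; exact Finset.sum_congr rfl fun k _ => hzk k
    _ = 0 := by rw [geom_sum_eq hz1, hzN]; simp

lemma sum_cos_sq (N w : ℕ) (hw : 0 < w) (hwN : w < N) :
    ∑ k ∈ Finset.range N, Real.cos (Real.pi * k * w / N) ^ 2 = N / 2 := by
  have h : ∀ k : ℕ, Real.cos (Real.pi * k * w / N) ^ 2
      = 1 / 2 + Real.cos (2 * Real.pi * k * w / N) / 2 := by
    intro k
    rw [Real.cos_sq, show 2 * (Real.pi * k * w / N) = 2 * Real.pi * k * w / N by ring]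
  simp_rw [h]
  have h2 : ∑ x ∈ Finset.range N, Real.cos (2 * Real.pi * x * w / N) / 2 = 0 := by
    rw [← Finset.sum_div, sum_cos_geom N w hw hwN]; norm_num
  rw [Finset.sum_add_distrib, h2, add_zero, Finset.sum_const, Finset.card_range, nsmul_eq_mul]
  ring

lemma zmod_sum_cos_sq (N : ℕ) [NeZero N] (w : ℕ) (hw : 0 < w) (hwN : w < N) :
    ∑ a : ZMod N, Real.cos (Real.pi * a.val * w / N) ^ 2 = N / 2 := by
  rw [← sum_cos_sq N w hw hwN]
  apply Finset.sum_nbij' (fun a => (a : ZMod N).val) (fun k => ((k : ℕ) : ZMod N))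
  · intro a _; exact Finset.mem_range.mpr (ZMod.val_lt a)
  · intro k _; exact Finset.mem_univ _
  · intro a _; exact ZMod.natCast_rightInverse a
  · intro k hk; exact ZMod.val_natCast_of_lt (Finset.mem_range.mp hk)
  · intro a _; rfl

theorem expectation_Z (N m : ℕ) (hN : 2 ≤ N) (hm : 1 ≤ m) [NeZero N] (s : ZMod N) :
    (1 / (N : ℝ) ^ m) * ∑ k : Fin m → ZMod N,
        (((2 ^ m : ℝ)) ^ 2 / N) * ∑ j : ZMod N,
          ∏ i, (Real.cos (Real.pi * ((k i).val : ℝ) * (((s - j).val : ℝ)) / N)) ^ 2 =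
      ((2 ^ m : ℝ) / N) * (N + 2 ^ m - 1) := by
  have hNpos : 0 < N := by omega
  have hN0 : (N : ℝ) ≠ 0 := by exact_mod_cast hNpos.ne'
  rw [← Finset.mul_sum, Finset.sum_comm]
  have key : ∀ j : ZMod N,
      ∑ k : Fin m → ZMod N, ∏ i, (Real.cos (Real.pi * ((k i).val : ℝ) * (((s - j).val : ℝ)) / N)) ^ 2
        = (∑ a : ZMod N, Real.cos (Real.pi * (a.val : ℝ) * (((s - j).val : ℝ)) / N) ^ 2) ^ m :=
    fun j => (Fintype.sum_pow (fun a : ZMod N =>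
      Real.cos (Real.pi * (a.val : ℝ) * (((s - j).val : ℝ)) / N) ^ 2) m).symm
  simp_rw [key]
  have hsum : ∑ j : ZMod N,
      (∑ a : ZMod N, Real.cos (Real.pi * (a.val : ℝ) * (((s - j).val : ℝ)) / N) ^ 2) ^ m
      = (N : ℝ) ^ m + (N - 1) * ((N : ℝ) / 2) ^ m := by
    rw [← Finset.add_sum_erase _ _ (Finset.mem_univ s)]
    have h1 : (∑ a : ZMod N, Real.cos (Real.pi * (a.val : ℝ) * (((s - s).val : ℝ)) / N) ^ 2) ^ m
        = (N : ℝ) ^ m := by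
      simp [ZMod.card]
    have h2 : ∀ j ∈ Finset.univ.erase s,
        (∑ a : ZMod N, Real.cos (Real.pi * (a.val : ℝ) * (((s - j).val : ℝ)) / N) ^ 2) ^ m
        = ((N : ℝ) / 2) ^ m := by
      intro j hj
      have hjs : s - j ≠ 0 := sub_ne_zero.mpr (Finset.ne_of_mem_erase hj).symm
      rw [zmod_sum_cos_sq N (s - j).val (ZMod.val_pos.mpr hjs) (ZMod.val_lt _)]
    rw [h1, Finset.sum_congr rfl h2, Finset.sum_const, Finset.card_erase_of_mem (Finset.mem_univ s)]
    simp only [Finset.card_univ, ZMod.card, nsmul_eq_mul]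
    rw [Nat.cast_sub (by omega)]
    push_cast
    ring
  rw [hsum]
  have h2m : (2 : ℝ) ^ m ≠ 0 := by positivity
  field_simp
  have h12 : ((1:ℝ) / 2) ^ m * 2 ^ m = 1 := by rw [← mul_pow]; norm_num
  linear_combination ((N:ℝ) * (N:ℝ) ^ m - (N:ℝ) ^ m) * h12
end
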